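/- Let σ^∨ ⊆ M_ℝ be a full-dimensional closed convex polyhedral cone with nonempty interior, and let v₁, …, v_s, w₁, …, w_t be nonzero vectors in the dual cone σ := (σ^∨)^∨ ⊆ N_ℝ. Let C := {m ∈ M_ℝ : ⟨m, v_i⟩ ≤ −n_i for i = 1,…,s and ⟨m, w_j⟩ > −l_j for j = 1,…,t} and assume C is bounded and each inequality defines a facet of the closure of C. Then for r ∈ M_ℝ, the set C_r := {(x, y) : x + y = r, x ∈ C, y ∈ Int(σ^∨)} is nonempty and open in the affine subspace {(x,y) : x + y = r} if and only if r ∈ C. -/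

import Mathlib

open Filter Topology

/-- The convex cone generated by a set of vectors. -/
def coneSpan {V : Type*} [AddCommGroup V] [Module ℝ V] (S : Set V) : Set V :=
  { x | ∃ (t : Finset V) (c : V → ℝ), ↑t ⊆ S ∧ (∀ v, 0 ≤ c v) ∧ x = ∑ v ∈ t, c v • v }

private lemma dual_pos_of_mem_interior {E : Type*} [NormedAddCommGroup E] [NormedSpace ℝ E]
    {K : Set E} {f : Module.Dual ℝ E} (hfc : Continuous f) (hf : f ≠ 0)
    (hfK : ∀ x ∈ K, 0 ≤ f x) {y : E} (hy : y ∈ interior K) : 0 < f y := by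
  obtain ⟨z, hz⟩ : ∃ z, f z ≠ 0 := by
    by_contra h
    push_neg at h
    exact hf (LinearMap.ext fun z => h z)
  set z' : E := (-(f z)⁻¹) • z with hz'
  have hfz' : f z' = -1 := by
    rw [hz', map_smul, smul_eq_mul]
    field_simp
  have hcont : Continuous fun δ : ℝ => y + δ • z' := by fun_prop
  have htend : Tendsto (fun δ : ℝ => y + δ • z') (𝓝 0) (𝓝 y) := by
    simpa using hcont.tendsto 0
  have hev : ∀ᶠ δ : ℝ in 𝓝 0, y + δ • z' ∈ interior K :=
    htend.eventually_mem (isOpen_interior.mem_nhds hy)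
  have hev' : ∀ᶠ δ : ℝ in 𝓝[>] 0, y + δ • z' ∈ interior K :=
    hev.filter_mono nhdsWithin_le_nhds
  obtain ⟨δ, hδmem, hδpos⟩ := (hev'.and self_mem_nhdsWithin).exists
  have h0 : 0 ≤ f (y + δ • z') := hfK _ (interior_subset hδmem)
  have hval : f (y + δ • z') = f y - δ := by
    rw [map_add, map_smul, hfz', smul_eq_mul]; ring
  rw [hval] at h0
  have : (0:ℝ) < δ := hδpos
  linarith

private lemma smul_mem_interior' {E : Type*} [NormedAddCommGroup E] [NormedSpace ℝ E]
    {K : Set E} (hcone : ∀ a : ℝ, 0 ≤ a → ∀ x ∈ K, a • x ∈ K)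
    {y : E} (hy : y ∈ interior K) {ε : ℝ} (hε : 0 < ε) : ε • y ∈ interior K := by
  have hmap : IsOpenMap fun x : E => ε • x := isOpenMap_smul₀ hε.ne'
  have hopen : IsOpen ((fun x : E => ε • x) '' interior K) := hmap _ isOpen_interior
  have hsub : ((fun x : E => ε • x) '' interior K) ⊆ K := by
    rintro _ ⟨u, hu, rfl⟩
    exact hcone ε hε.le u (interior_subset hu)
  exact interior_maximal hsub hopen ⟨y, hy, rfl⟩

theorem stmt14 (E : Type*) [NormedAddCommGroup E] [NormedSpace ℝ E] [FiniteDimensional ℝ E]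
    (K : Set E) (hconv : Convex ℝ K) (hcone : ∀ a : ℝ, 0 ≤ a → ∀ x ∈ K, a • x ∈ K)
    (hclosed : IsClosed K) (hpoly : ∃ S : Finset E, K = coneSpan (S : Set E))
    (hint : (interior K).Nonempty)
    (s t : ℕ) (v : Fin s → Module.Dual ℝ E) (w : Fin t → Module.Dual ℝ E)
    (n : Fin s → ℝ) (l : Fin t → ℝ)
    (hv : ∀ i, v i ≠ 0 ∧ ∀ x ∈ K, 0 ≤ v i x)
    (hw : ∀ j, w j ≠ 0 ∧ ∀ x ∈ K, 0 ≤ w j x)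
    (C : Set E) (hC : C = { m | (∀ i, v i m ≤ -n i) ∧ (∀ j, -l j < w j m) })
    (hbounded : Bornology.IsBounded C)
    (hfacetv : ∀ i, ∃ m ∈ closure C, v i m = -n i ∧
      (∀ i', i' ≠ i → v i' m < -n i') ∧ (∀ j, -l j < w j m))
    (hfacetw : ∀ j, ∃ m ∈ closure C, w j m = -l j ∧
      (∀ i, v i m < -n i) ∧ (∀ j', j' ≠ j → -l j' < w j' m)) :
    ∀ r : E,
      (({ x : E | x ∈ C ∧ r - x ∈ interior K }).Nonempty ∧
        IsOpen { x : E | x ∈ C ∧ r - x ∈ interior K }) ↔ r ∈ C := by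
  have hvc : ∀ i, Continuous (v i) := fun i => (v i).continuous_of_finiteDimensional
  have hwc : ∀ j, Continuous (w j) := fun j => (w j).continuous_of_finiteDimensional
  intro r
  set S : Set E := { x : E | x ∈ C ∧ r - x ∈ interior K } with hSdef
  constructor
  · rintro ⟨⟨x0, hx0⟩, hopen⟩
    -- strictness at every point of S
    have hstrict : ∀ x ∈ S, ∀ i, v i x < -n i := by
      intro x hx i
      by_contra hlt
      push_neg at hlt
      have heq : v i x = -n i := le_antisymm ((hC ▸ hx.1).1 i) hlt
      obtain ⟨z, hz⟩ : ∃ z, v i z ≠ 0 := by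
        by_contra h
        push_neg at h
        exact (hv i).1 (LinearMap.ext fun z => h z)
      set z' : E := (v i z)⁻¹ • z with hz'
      have hvz' : v i z' = 1 := by
        rw [hz', map_smul, smul_eq_mul]; field_simp
      have htend : Tendsto (fun δ : ℝ => x + δ • z') (𝓝 0) (𝓝 x) := by
        have hcont : Continuous fun δ : ℝ => x + δ • z' := by fun_prop
        simpa using hcont.tendsto 0
      have hev : ∀ᶠ δ : ℝ in 𝓝 0, x + δ • z' ∈ S :=
        htend.eventually_mem (hopen.mem_nhds hx)
      have hev' : ∀ᶠ δ : ℝ in 𝓝[>] 0, x + δ • z' ∈ S :=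
        hev.filter_mono nhdsWithin_le_nhds
      obtain ⟨δ, hδmem, hδpos⟩ := (hev'.and self_mem_nhdsWithin).exists
      have hδpos' : (0:ℝ) < δ := hδpos
      have h1 : v i (x + δ • z') ≤ -n i := (hC ▸ hδmem.1).1 i
      rw [map_add, map_smul, hvz', smul_eq_mul, mul_one, heq] at h1
      linarith
    have hx0C := hC ▸ hx0.1
    have hwr : ∀ j, -l j < w j r := by
      intro j
      have h1 : -l j < w j x0 := hx0C.2 j
      have h2 : 0 < w j (r - x0) :=
        dual_pos_of_mem_interior (hwc j) (hw j).1 (hw j).2 hx0.2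
      rw [map_sub] at h2
      linarith
    rw [hC]
    refine ⟨fun i => ?_, hwr⟩
    by_contra hi
    push_neg at hi
    -- hitting time argument
    set T : Finset (Fin s) := Finset.univ.filter (fun i' => -n i' < v i' r) with hT
    have hiT : i ∈ T := by simp [hT, hi]
    have hTne : T.Nonempty := ⟨i, hiT⟩
    set f : Fin s → ℝ := fun i' => (-n i' - v i' x0) / (v i' r - v i' x0) with hf
    set θ : ℝ := T.inf' hTne f with hθ
    have hmemT : ∀ i' ∈ T, v i' x0 < -n i' ∧ -n i' < v i' r := by
      intro i' hi'
      exact ⟨hstrict x0 hx0 i', (Finset.mem_filter.1 hi').2⟩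
    have hfpos : ∀ i' ∈ T, 0 < f i' ∧ f i' < 1 := by
      intro i' hi'
      obtain ⟨h1, h2⟩ := hmemT i' hi'
      constructor
      · apply div_pos <;> linarith
      · rw [div_lt_one (by linarith)]; linarith
    obtain ⟨imin, himinT, himineq⟩ := T.exists_mem_eq_inf' hTne f
    have hθpos : 0 < θ := by
      rw [hθ, himineq]; exact (hfpos imin himinT).1
    have hθlt : θ < 1 := by
      rw [hθ, himineq]; exact (hfpos imin himinT).2
    set x1 : E := x0 + θ • (r - x0) with hx1
    have hvx1 : ∀ i', v i' x1 = v i' x0 + θ * (v i' r - v i' x0) := by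
      intro i'; rw [hx1, map_add, map_smul, map_sub, smul_eq_mul]
    have hwx1 : ∀ j, w j x1 = w j x0 + θ * (w j r - w j x0) := by
      intro j; rw [hx1, map_add, map_smul, map_sub, smul_eq_mul]
    have hx1S : x1 ∈ S := by
      refine ⟨hC ▸ ⟨fun i' => ?_, fun j => ?_⟩, ?_⟩
      · rw [hvx1]
        by_cases hi' : i' ∈ T
        · have hle : θ ≤ f i' := Finset.inf'_le f hi'
          obtain ⟨h1, h2⟩ := hmemT i' hi'
          rw [hf, le_div_iff₀ (by linarith)] at hle
          linarith
        · have h2 : v i' r ≤ -n i' := by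
            by_contra h
            push_neg at h
            exact hi' (by simp [hT, h])
          have h1 : v i' x0 < -n i' := hstrict x0 hx0 i'
          nlinarith
      · rw [hwx1]
        have h1 : -l j < w j x0 := hx0C.2 j
        have h2 : -l j < w j r := hwr j
        nlinarith
      · have : r - x1 = (1 - θ) • (r - x0) := by
          rw [hx1, sub_smul, one_smul]; abel
        rw [this]
        exact smul_mem_interior' hcone hx0.2 (by linarith)
    have hlt := hstrict x1 hx1S imin
    have heq : v imin x1 = -n imin := by
      rw [hvx1, hθ, himineq, hf]
      obtain ⟨h1, h2⟩ := hmemT imin himinT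
      have hD : (v imin) r - (v imin) x0 ≠ 0 := ne_of_gt (by linarith)
      field_simp
      ring
    linarith
  · rintro hr
    have hrC := hC ▸ hr
    obtain ⟨y, hy⟩ := hint
    have hwy : ∀ j, 0 < w j y := fun j =>
      dual_pos_of_mem_interior (hwc j) (hw j).1 (hw j).2 hy
    have hvy : ∀ i, 0 < v i y := fun i =>
      dual_pos_of_mem_interior (hvc i) (hv i).1 (hv i).2 hy
    constructor
    · have hev : ∀ᶠ ε : ℝ in 𝓝[>] 0, ∀ j, -l j < w j r - ε * w j y := by
        rw [eventually_all]
        intro j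
        have hcont : Tendsto (fun ε : ℝ => w j r - ε * w j y) (𝓝[>] 0) (𝓝 (w j r)) := by
          apply Tendsto.mono_left _ nhdsWithin_le_nhds
          exact (Continuous.tendsto' (by fun_prop) 0 (w j r) (by ring))
        exact hcont.eventually_mem (Ioi_mem_nhds (hrC.2 j))
      obtain ⟨ε, hε1, hε2⟩ := (hev.and self_mem_nhdsWithin).exists
      have hεpos : (0:ℝ) < ε := hε2
      refine ⟨r - ε • y, ⟨hC ▸ ⟨fun i => ?_, fun j => ?_⟩, ?_⟩⟩
      · rw [map_sub, map_smul, smul_eq_mul]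
        have := hrC.1 i
        nlinarith [hvy i]
      · rw [map_sub, map_smul, smul_eq_mul]
        exact hε1 j
      · have : r - (r - ε • y) = ε • y := by abel
        rw [this]
        exact smul_mem_interior' hcone hy hεpos
    · have hSeq : S = (⋂ i, (v i) ⁻¹' Set.Iio (-n i)) ∩
          ((⋂ j, (w j) ⁻¹' Set.Ioi (-l j)) ∩ ((fun x => r - x) ⁻¹' interior K)) := by
        ext x
        simp only [hSdef, Set.mem_setOf_eq, Set.mem_inter_iff, Set.mem_iInter,
          Set.mem_preimage, Set.mem_Iio, Set.mem_Ioi, hC]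
        constructor
        · rintro ⟨⟨h1, h2⟩, h3⟩
          refine ⟨fun i => ?_, h2, h3⟩
          have hp : 0 < v i (r - x) :=
            dual_pos_of_mem_interior (hvc i) (hv i).1 (hv i).2 h3
          rw [map_sub] at hp
          have := hrC.1 i
          linarith
        · rintro ⟨h1, h2, h3⟩
          exact ⟨⟨fun i => (h1 i).le, h2⟩, h3⟩
      rw [hSeq]
      exact ((isOpen_iInter_of_finite fun i =>
          isOpen_Iio.preimage (hvc i)).inter
        ((isOpen_iInter_of_finite fun j => isOpen_Ioi.preimage (hwc j)).inter
          (isOpen_interior.preimage (continuous_const.sub continuous_id))))
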